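/- For a condensable consonant plausibility function, pl(K) = sup_{u ∈ K} f_S(u) for all K ⊆ 𝕌, where f_S(u) = P_S(S ∋ u) is the contour function; i.e., the plausibility function is determined by its values on singletons. -/

import Mathlib

open MeasureTheory Set ENNReal

/-- A condensable consonant plausibility function is determined by its contour function:
`pl(K) = sup_{u ∈ K} pl({u})` for all `K`. -/
theorem stmt8 {Ω U : Type*} [MeasurableSpace Ω]
    (P : Measure Ω) (S : Ω → Set U)
    (hnested : ∀ ω ω', S ω ⊆ S ω' ∨ S ω' ⊆ S ω)
    (pl : Set U → ℝ≥0∞)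
    (hpl : ∀ K : Set U, pl K = P {ω | (S ω ∩ K).Nonempty})
    (hcond : ∀ 𝒦 : Set (Set U),
      (∀ K₁ ∈ 𝒦, ∀ K₂ ∈ 𝒦, ∃ K₃ ∈ 𝒦, K₁ ∪ K₂ ⊆ K₃) →
      pl (⋃₀ 𝒦) = ⨆ K ∈ 𝒦, pl K)
    (K : Set U) :
    pl K = ⨆ u ∈ K, pl {u} := by
  -- the events A u
  set A : U → Set Ω := fun u => {ω | u ∈ S ω} with hA
  -- A is a chain
  have hchain : ∀ u v : U, A u ⊆ A v ∨ A v ⊆ A u := by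
    intro u v
    by_contra h
    push_neg at h
    obtain ⟨ω, hωu, hωv⟩ := not_subset.mp h.1
    obtain ⟨ω', hω'v, hω'u⟩ := not_subset.mp h.2
    rcases hnested ω ω' with hs | hs
    · exact hω'u (hs hωu)
    · exact hωv (hs hω'v)
  have hsing : ∀ u : U, pl {u} = P (A u) := by
    intro u
    rw [hpl]
    congr 1
    ext ω
    simp [hA, Set.inter_singleton_nonempty]
  -- plausibility of a finite set
  have hfin : ∀ F : Set U, F.Finite → pl F = ⨆ u ∈ F, pl {u} := by
    intro F hF
    rcases F.eq_empty_or_nonempty with rfl | hne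
    · simp [hpl]
    · obtain ⟨u₀, hu₀, hmax⟩ := hF.exists_maximalFor A F hne
    -- A u₀ is the largest among u ∈ F
      have hle : ∀ u ∈ F, A u ⊆ A u₀ := by
        intro u hu
        rcases hchain u u₀ with h | h
        · exact h
        · exact hmax hu h
      have hunion : {ω | (S ω ∩ F).Nonempty} = A u₀ := by
        ext ω
        constructor
        · rintro ⟨x, hxS, hxF⟩
          exact hle x hxF hxS
        · intro h
          exact ⟨u₀, h, hu₀⟩
      rw [hpl, hunion]
      apply le_antisymm
      · rw [← hsing]
        exact le_iSup₂ (f := fun u (_ : u ∈ F) => pl {u}) u₀ hu₀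
      · apply iSup₂_le
        intro u hu
        rw [hsing]
        exact measure_mono (hle u hu)
  -- finite subsets of K
  set 𝒦 : Set (Set U) := {F | F ⊆ K ∧ F.Finite} with h𝒦
  have hdir : ∀ K₁ ∈ 𝒦, ∀ K₂ ∈ 𝒦, ∃ K₃ ∈ 𝒦, K₁ ∪ K₂ ⊆ K₃ := by
    rintro K₁ ⟨h₁K, h₁f⟩ K₂ ⟨h₂K, h₂f⟩
    exact ⟨K₁ ∪ K₂, ⟨union_subset h₁K h₂K, h₁f.union h₂f⟩, subset_rfl⟩
  have hUnion : ⋃₀ 𝒦 = K := by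
    apply subset_antisymm
    · exact sUnion_subset fun F hF => hF.1
    · intro u hu
      exact ⟨{u}, ⟨singleton_subset_iff.mpr hu, finite_singleton u⟩, rfl⟩
  calc pl K = ⨆ F ∈ 𝒦, pl F := by rw [← hUnion, hcond 𝒦 hdir]
    _ = ⨆ u ∈ K, pl {u} := by
        apply le_antisymm
        · apply iSup₂_le
          intro F hF
          rw [hfin F hF.2]
          exact iSup₂_le fun u hu => le_iSup₂ (f := fun u (_ : u ∈ K) => pl {u}) u (hF.1 hu)
        · apply iSup₂_le
          intro u hu
          have : pl {u} ≤ ⨆ v ∈ ({u} : Set U), pl {v} :=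
            le_iSup₂ (f := fun v (_ : v ∈ ({u} : Set U)) => pl {v}) u rfl
          calc pl {u} = pl {u} := rfl
            _ ≤ ⨆ F ∈ 𝒦, pl F := le_iSup₂ (f := fun F (_ : F ∈ 𝒦) => pl F) {u}
                ⟨singleton_subset_iff.mpr hu, finite_singleton u⟩
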